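/- The set F(φ, a, α) of C¹ volume-preserving diffeomorphisms f such that the set of points x where the Birkhoff limit φ_f(x) exists and is ≥ a has measure ≥ α, is a G_delta subset of the space of C¹ volume-preserving diffeomorphisms; consequently G(φ, a, ε) = F(φ, a, 1−ε) ∪ F(−φ, −a, 1−ε) is also G_delta. -/

import Mathlib

open MeasureTheory Filter
open scoped ENNReal

/-- The set where the Birkhoff average of `φ` under `f` exists and is at least `a`. -/
def birkhoffGe {M : Type*} (f : M → M) (φ : M → ℝ) (a : ℝ) : Set M :=
  {x | ∃ L : ℝ, a ≤ L ∧
    Tendsto (fun n : ℕ => (1 / (n : ℝ)) * ∑ j ∈ Finset.range n, φ (f^[j] x))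
      atTop (nhds L)}

section Birkhoff

variable {X : Type*} [MeasurableSpace X] {μ : Measure X} [IsProbabilityMeasure μ]
  {T : X → X}

/-- running maximum of Birkhoff sums, `maxS h T N x = max_{0 ≤ n ≤ N} S_n h x`. -/
noncomputable def maxS (T : X → X) (h : X → ℝ) : ℕ → X → ℝ
  | 0 => fun _ => 0
  | (N+1) => fun x => max (maxS T h N x) (birkhoffSum T h (N+1) x)

lemma maxS_nonneg (T : X → X) (h : X → ℝ) : ∀ N x, 0 ≤ maxS T h N x := by
  intro N x
  induction N with
  | zero => exact le_refl _
  | succ N ih => exact le_trans ih (le_max_left _ _)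

lemma maxS_mono (T : X → X) (h : X → ℝ) (x : X) : Monotone fun N => maxS T h N x :=
  monotone_nat_of_le_succ fun N => le_max_left _ _

lemma maxS_succ_eq (T : X → X) (h : X → ℝ) (N : ℕ) (x : X) :
    maxS T h (N+1) x = max 0 (h x + maxS T h N (T x)) := by
  induction N generalizing x with
  | zero =>
      simp [maxS, birkhoffSum_one]
  | succ N ih =>
      have : maxS T h (N+2) x = max (maxS T h (N+1) x) (birkhoffSum T h (N+2) x) := rfl
      rw [this, ih, birkhoffSum_succ']
      have h2 : maxS T h (N+1) (T x) = max (maxS T h N (T x)) (birkhoffSum T h (N+1) (T x)) := rfl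
      rw [h2, ← max_add_add_left, ← max_assoc]

lemma measurable_birkhoffSum (hT : Measurable T) {h : X → ℝ} (hh : Measurable h) (n : ℕ) :
    Measurable fun x => birkhoffSum T h n x := by
  unfold birkhoffSum
  exact Finset.measurable_sum _ fun i _ => hh.comp (hT.iterate i)

lemma measurable_maxS (hT : Measurable T) {h : X → ℝ} (hh : Measurable h) (N : ℕ) :
    Measurable (maxS T h N) := by
  induction N with
  | zero => exact measurable_const
  | succ N ih => exact ih.max (measurable_birkhoffSum hT hh (N+1))

lemma abs_birkhoffSum_le {h : X → ℝ} {C : ℝ} (hC : ∀ x, |h x| ≤ C) (n : ℕ) (x : X) :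
    |birkhoffSum T h n x| ≤ n * C := by
  unfold birkhoffSum
  calc |∑ k ∈ Finset.range n, h (T^[k] x)| ≤ ∑ k ∈ Finset.range n, |h (T^[k] x)| :=
        Finset.abs_sum_le_sum_abs _ _
    _ ≤ ∑ _k ∈ Finset.range n, C := Finset.sum_le_sum fun i _ => hC _
    _ = n * C := by simp [Finset.sum_const, nsmul_eq_mul]

lemma maxS_le {h : X → ℝ} {C : ℝ} (hC : ∀ x, |h x| ≤ C) (hC0 : 0 ≤ C) (N : ℕ) (x : X) :
    maxS T h N x ≤ N * C := by
  induction N with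
  | zero => simp [maxS]
  | succ N ih =>
      refine max_le (ih.trans ?_) ?_
      · have : (N:ℝ) ≤ (N+1:ℕ) := by exact_mod_cast Nat.le_succ N
        nlinarith
      · have := (abs_le.mp (abs_birkhoffSum_le (T := T) hC (N+1) x)).2
        exact_mod_cast this

lemma integrable_of_bounded {h : X → ℝ} (hh : Measurable h) {C : ℝ} (hC : ∀ x, |h x| ≤ C) :
    Integrable h μ := by
  refine ⟨hh.aestronglyMeasurable, ?_⟩
  apply MeasureTheory.HasFiniteIntegral.of_bounded (C := C)
  exact ae_of_all _ fun x => by simpa [Real.norm_eq_abs] using hC x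


lemma birkhoffSum_le_maxS (T : X → X) (h : X → ℝ) (x : X) :
    ∀ {n N : ℕ}, n ≤ N → birkhoffSum T h n x ≤ maxS T h N x := by
  intro n N hnN
  induction N with
  | zero =>
      have : n = 0 := Nat.le_zero.mp hnN
      subst this; simp [maxS, birkhoffSum_zero]
  | succ N ih =>
      rcases Nat.le_succ_iff_eq_or_le.mp hnN with h1 | h1
      · subst h1; exact le_max_right _ _
      · exact le_trans (ih h1) (le_max_left _ _)

lemma maxS_pos_exists (T : X → X) (h : X → ℝ) (x : X) :
    ∀ {N : ℕ}, 0 < maxS T h N x → ∃ n, 1 ≤ n ∧ 0 < birkhoffSum T h n x := by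
  intro N hN
  induction N with
  | zero => simp [maxS] at hN
  | succ N ih =>
      rcases lt_max_iff.mp hN with h1 | h1
      · exact ih h1
      · exact ⟨N+1, Nat.succ_le_succ (Nat.zero_le _), h1⟩

/-- Maximal ergodic theorem. -/
theorem maximal_ergodic (hT : MeasurePreserving T μ μ) {h : X → ℝ} (hh : Measurable h)
    {C : ℝ} (hC : ∀ x, |h x| ≤ C) :
    0 ≤ ∫ x in {x | ∃ n, 1 ≤ n ∧ 0 < birkhoffSum T h n x}, h x ∂μ := by
  classical
  set C' := max C 0 with hC'def
  have hCC' : ∀ x, |h x| ≤ C' := fun x => (hC x).trans (le_max_left _ _)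
  have hC'0 : (0:ℝ) ≤ C' := le_max_right _ _
  have hTm := hT.measurable
  have hint : Integrable h μ := integrable_of_bounded hh hC
  set P : ℕ → X → ℝ := fun N => maxS T h (N+1) with hPdef
  have hPmeas : ∀ N, Measurable (P N) := fun N => measurable_maxS hTm hh (N+1)
  have hPbd : ∀ N x, |P N x| ≤ ((N:ℝ)+1) * C' := by
    intro N x
    rw [abs_le]
    constructor
    · have h1 := maxS_nonneg T h (N+1) x
      have h2 : (0:ℝ) ≤ ((N:ℝ)+1) * C' := by positivity
      simp only [hPdef]; linarith
    · have := maxS_le (T := T) hCC' hC'0 (N+1) x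
      simp only [hPdef]
      calc maxS T h (N+1) x ≤ ((N+1:ℕ):ℝ) * C' := this
        _ = ((N:ℝ)+1) * C' := by push_cast; ring
  have hPint : ∀ N, Integrable (P N) μ := fun N => integrable_of_bounded (hPmeas N) (hPbd N)
  have hPTint : ∀ N, Integrable (fun x => P N (T x)) μ :=
    fun N => integrable_of_bounded ((hPmeas N).comp hTm) (fun x => hPbd N (T x))
  set E : ℕ → Set X := fun N => {x | 0 < P N x} with hEdef
  have hEmeas : ∀ N, MeasurableSet (E N) := fun N => measurableSet_lt measurable_const (hPmeas N)
  have step1 : ∀ N, 0 ≤ ∫ x in E N, h x ∂μ := by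
    intro N
    have key : ∀ x ∈ E N, P N x - P N (T x) ≤ h x := by
      intro x hx
      have hx' : 0 < P N x := hx
      have h1 : P N x = max 0 (h x + maxS T h N (T x)) := maxS_succ_eq T h N x
      have ht : 0 < h x + maxS T h N (T x) := by
        by_contra hcon
        push_neg at hcon
        have : P N x ≤ 0 := by rw [h1]; exact max_le le_rfl hcon
        exact absurd hx' (not_lt.mpr this)
      have h2 : P N x = h x + maxS T h N (T x) := h1.trans (max_eq_right ht.le)
      have h5 : maxS T h N (T x) ≤ P N (T x) := maxS_mono T h (T x) (Nat.le_succ N)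
      linarith
    have mono_int : ∫ x in E N, (P N x - P N (T x)) ∂μ ≤ ∫ x in E N, h x ∂μ := by
      exact setIntegral_mono_on ((hPint N).sub (hPTint N)).integrableOn hint.integrableOn
        (hEmeas N) key
    have compl_nonpos : ∫ x in (E N)ᶜ, (P N x - P N (T x)) ∂μ ≤ 0 := by
      apply setIntegral_nonpos (hEmeas N).compl
      intro x hx
      have hx0 : P N x = 0 :=
        le_antisymm (not_lt.mp hx) (maxS_nonneg T h (N+1) x)
      have h6 := maxS_nonneg T h (N+1) (T x)
      have : (0:ℝ) ≤ P N (T x) := h6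
      rw [hx0]; linarith
    have hmap : ∫ x, P N (T x) ∂μ = ∫ y, P N y ∂μ := by
      rw [← MeasureTheory.integral_map hTm.aemeasurable (hPmeas N).aestronglyMeasurable,
        hT.map_eq]
    have total : ∫ x, (P N x - P N (T x)) ∂μ = 0 := by
      rw [integral_sub (hPint N) (hPTint N), hmap, sub_self]
    have split := integral_add_compl (hEmeas N) ((hPint N).sub (hPTint N))
    have h7 : 0 ≤ ∫ x in E N, (P N x - P N (T x)) ∂μ := by
      have h8 : (∫ x in E N, (P N x - P N (T x)) ∂μ) + ∫ x in (E N)ᶜ, (P N x - P N (T x)) ∂μ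
          = 0 := by rw [← total]; exact split
      linarith
    linarith
  have hmonoE : Monotone E := by
    intro a b hab x hx
    exact lt_of_lt_of_le hx (maxS_mono T h x (Nat.succ_le_succ hab))
  have hunion : (⋃ N, E N) = {x | ∃ n, 1 ≤ n ∧ 0 < birkhoffSum T h n x} := by
    ext x
    simp only [Set.mem_iUnion, Set.mem_setOf_eq]
    constructor
    · rintro ⟨N, hN⟩
      exact maxS_pos_exists T h x hN
    · rintro ⟨n, hn1, hn⟩
      exact ⟨n, lt_of_lt_of_le hn (birkhoffSum_le_maxS T h x (Nat.le_succ n))⟩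
  have hconv := tendsto_setIntegral_of_monotone hEmeas hmonoE hint.integrableOn
  have hfin : 0 ≤ ∫ x in ⋃ N, E N, h x ∂μ := ge_of_tendsto' hconv step1
  rwa [hunion] at hfin




theorem maximal_ergodic_invariant (hT : MeasurePreserving T μ μ) {g : X → ℝ} (hg : Measurable g)
    {C : ℝ} (hC : ∀ x, |g x| ≤ C) {E : Set X} (hE : MeasurableSet E)
    (hinv : ∀ x, x ∈ E ↔ T x ∈ E) (c : ℝ)
    (hfr : ∀ x ∈ E, ∃ n, 1 ≤ n ∧ c * n < birkhoffSum T g n x) :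
    c * (μ E).toReal ≤ ∫ x in E, g x ∂μ := by
  classical
  set h : X → ℝ := E.indicator (fun y => g y - c) with hdef
  have hmeas : Measurable h := (hg.sub measurable_const).indicator hE
  have hbd : ∀ x, |h x| ≤ C + |c| := by
    intro x
    have hgx := hC x
    have hgx0 := abs_nonneg (g x)
    by_cases hx : x ∈ E
    · have h1 : |g x - c| ≤ |g x| + |c| := by
        have := abs_add_le (g x) (-c)
        simpa [sub_eq_add_neg] using this
      simp only [hdef, Set.indicator_of_mem hx]
      linarith
    · simp only [hdef, Set.indicator_of_notMem hx, abs_zero]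
      linarith [abs_nonneg c]
  have horb : ∀ x (j : ℕ), (T^[j] x ∈ E ↔ x ∈ E) := by
    intro x j
    induction j with
    | zero => simp
    | succ j ih => rw [Function.iterate_succ_apply', ← hinv (T^[j] x)]; exact ih
  have hsum_mem : ∀ x ∈ E, ∀ n, birkhoffSum T h n x = birkhoffSum T g n x - n * c := by
    intro x hx n
    unfold birkhoffSum
    have : ∀ k ∈ Finset.range n, h (T^[k] x) = g (T^[k] x) - c := by
      intro k _
      have : T^[k] x ∈ E := (horb x k).mpr hx
      simp [hdef, Set.indicator_of_mem this]
    rw [Finset.sum_congr rfl this, Finset.sum_sub_distrib]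
    simp [Finset.sum_const, nsmul_eq_mul]
  have hsum_not : ∀ x, x ∉ E → ∀ n, birkhoffSum T h n x = 0 := by
    intro x hx n
    unfold birkhoffSum
    apply Finset.sum_eq_zero
    intro k _
    have : T^[k] x ∉ E := fun hmem => hx ((horb x k).mp hmem)
    simp [hdef, Set.indicator_of_notMem this]
  have hEeq : {x | ∃ n, 1 ≤ n ∧ 0 < birkhoffSum T h n x} = E := by
    ext x
    simp only [Set.mem_setOf_eq]
    constructor
    · rintro ⟨n, _, hn⟩
      by_contra hx
      rw [hsum_not x hx n] at hn
      exact lt_irrefl 0 hn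
    · intro hx
      obtain ⟨n, hn1, hn2⟩ := hfr x hx
      exact ⟨n, hn1, by rw [hsum_mem x hx n]; linarith⟩
  have hmax := maximal_ergodic hT hmeas hbd
  rw [hEeq] at hmax
  have hgint : IntegrableOn g E μ := (integrable_of_bounded hg hC).integrableOn
  have hcongr : ∫ x in E, h x ∂μ = ∫ x in E, (g x - c) ∂μ := by
    apply setIntegral_congr_fun hE
    intro x hx
    simp [hdef, Set.indicator_of_mem hx]
  rw [hcongr, integral_sub hgint (integrableOn_const (measure_lt_top μ E).ne)] at hmax
  rw [setIntegral_const] at hmax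
  rw [smul_eq_mul] at hmax
  rw [measureReal_def] at hmax
  nlinarith [hmax]

section Freq

/-- Frequently below `p` (up to every `ε`). -/
def FB (u : ℕ → ℝ) (p : ℝ) : Prop := ∀ ε > 0, ∀ n0 : ℕ, ∃ n, n0 ≤ n ∧ u n < p + ε

/-- Frequently above `q` (up to every `ε`). -/
def FA (u : ℕ → ℝ) (q : ℝ) : Prop := ∀ ε > 0, ∀ n0 : ℕ, ∃ n, n0 ≤ n ∧ q - ε < u n

lemma FB_of_tendsto_sub {u v : ℕ → ℝ} (h : Tendsto (fun n => u n - v n) atTop (nhds 0))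
    {p : ℝ} (hu : FB u p) : FB v p := by
  intro ε hε n0
  obtain ⟨N, hN⟩ := Metric.tendsto_atTop.mp h (ε/2) (by linarith)
  obtain ⟨n, hn1, hn2⟩ := hu (ε/2) (by linarith) (max n0 N)
  refine ⟨n, le_trans (le_max_left _ _) hn1, ?_⟩
  have h3 := hN n (le_trans (le_max_right _ _) hn1)
  rw [Real.dist_eq, sub_zero] at h3
  have h4 := (abs_lt.mp h3).1
  linarith

lemma FA_of_tendsto_sub {u v : ℕ → ℝ} (h : Tendsto (fun n => u n - v n) atTop (nhds 0))
    {q : ℝ} (hu : FA u q) : FA v q := by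
  intro ε hε n0
  obtain ⟨N, hN⟩ := Metric.tendsto_atTop.mp h (ε/2) (by linarith)
  obtain ⟨n, hn1, hn2⟩ := hu (ε/2) (by linarith) (max n0 N)
  refine ⟨n, le_trans (le_max_left _ _) hn1, ?_⟩
  have h3 := hN n (le_trans (le_max_right _ _) hn1)
  rw [Real.dist_eq, sub_zero] at h3
  have h4 := (abs_lt.mp h3).2
  linarith

lemma FB_shift {u : ℕ → ℝ} {p : ℝ} : FB (fun n => u (n+1)) p ↔ FB u p := by
  constructor
  · intro h ε hε n0
    obtain ⟨n, hn1, hn2⟩ := h ε hε n0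
    exact ⟨n+1, le_trans hn1 (Nat.le_succ n), hn2⟩
  · intro h ε hε n0
    obtain ⟨n, hn1, hn2⟩ := h ε hε (n0+1)
    refine ⟨n-1, by omega, ?_⟩
    have he : n - 1 + 1 = n := by omega
    simpa [he] using hn2

lemma FA_shift {u : ℕ → ℝ} {q : ℝ} : FA (fun n => u (n+1)) q ↔ FA u q := by
  constructor
  · intro h ε hε n0
    obtain ⟨n, hn1, hn2⟩ := h ε hε n0
    exact ⟨n+1, le_trans hn1 (Nat.le_succ n), hn2⟩
  · intro h ε hε n0
    obtain ⟨n, hn1, hn2⟩ := h ε hε (n0+1)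
    refine ⟨n-1, by omega, ?_⟩
    have he : n - 1 + 1 = n := by omega
    simpa [he] using hn2

end Freq

/-- Birkhoff average. -/
noncomputable def avg (T : X → X) (g : X → ℝ) (n : ℕ) (x : X) : ℝ := (1/(n:ℝ)) * birkhoffSum T g n x

lemma abs_avg_le {g : X → ℝ} {C : ℝ} (hC : ∀ x, |g x| ≤ C) (hC0 : 0 ≤ C) (n : ℕ) (x : X) :
    |avg T g n x| ≤ C := by
  rcases Nat.eq_zero_or_pos n with hn | hn
  · subst hn; simp [avg, hC0]
  · have hn0 : (0:ℝ) < n := by exact_mod_cast hn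
    have hS := abs_birkhoffSum_le (T := T) hC n x
    rw [avg, abs_mul, abs_of_pos (by positivity : (0:ℝ) < 1/(n:ℝ))]
    rw [div_mul_eq_mul_div, one_mul, div_le_iff₀ hn0]
    calc |birkhoffSum T g n x| ≤ n * C := hS
      _ = C * n := mul_comm _ _

lemma tendsto_avg_comp_sub {g : X → ℝ} {C : ℝ} (hC : ∀ x, |g x| ≤ C) (hC0 : 0 ≤ C) (x : X) :
    Tendsto (fun n => avg T g n (T x) - avg T g (n+1) x) atTop (nhds 0) := by
  have key : ∀ n : ℕ, 1 ≤ n → |avg T g n (T x) - avg T g (n+1) x| ≤ 2*C/n := by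
    intro n hn
    have hn0 : (0:ℝ) < n := by exact_mod_cast hn
    have hid : avg T g n (T x) - avg T g (n+1) x = (avg T g (n+1) x - g x)/n := by
      have hS : birkhoffSum T g (n+1) x = g x + birkhoffSum T g n (T x) := birkhoffSum_succ' T g n x
      show (1/(n:ℝ)) * birkhoffSum T g n (T x) - (1/((n+1:ℕ):ℝ)) * birkhoffSum T g (n+1) x
        = ((1/((n+1:ℕ):ℝ)) * birkhoffSum T g (n+1) x - g x)/(n:ℝ)
      rw [hS]
      push_cast
      have h1 : ((n:ℝ)+1) ≠ 0 := by positivity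
      field_simp
      ring
    rw [hid, abs_div, abs_of_pos hn0]
    have h2 : |avg T g (n+1) x - g x| ≤ 2*C := by
      have ha := abs_avg_le (T := T) hC hC0 (n+1) x
      have hb := hC x
      have h3 : |avg T g (n+1) x - g x| ≤ |avg T g (n+1) x| + |g x| := by
        have := abs_add_le (avg T g (n+1) x) (-(g x))
        simpa [sub_eq_add_neg] using this
      linarith
    gcongr
  apply squeeze_zero_norm' (a := fun n : ℕ => 2*C/n)
  · filter_upwards [eventually_ge_atTop 1] with n hn
    simpa [Real.norm_eq_abs] using key n hn
  · exact tendsto_const_div_atTop_nhds_zero_nat (2*C)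

lemma measurable_avg (hT : Measurable T) {g : X → ℝ} (hg : Measurable g) (n : ℕ) :
    Measurable (avg T g n) :=
  (measurable_birkhoffSum hT hg n).const_mul _

lemma measurableSet_FB (hT : Measurable T) {g : X → ℝ} (hg : Measurable g) (p : ℝ) :
    MeasurableSet {x | FB (fun n => avg T g n x) p} := by
  have heq : {x | FB (fun n => avg T g n x) p}
      = ⋂ (k : ℕ), ⋂ (n0 : ℕ), ⋃ (n : ℕ), ⋃ (_ : n0 ≤ n), {x | avg T g n x < p + 1/((k:ℝ)+1)} := by
    ext x
    simp only [Set.mem_iInter, Set.mem_iUnion, Set.mem_setOf_eq]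
    constructor
    · intro h k n0
      obtain ⟨n, hn1, hn2⟩ := h (1/((k:ℝ)+1)) (by positivity) n0
      exact ⟨n, hn1, hn2⟩
    · intro h ε hε n0
      obtain ⟨k, hk⟩ := exists_nat_one_div_lt hε
      obtain ⟨n, hn1, hn2⟩ := h k n0
      exact ⟨n, hn1, by push_cast at hk ⊢; linarith⟩
  rw [heq]
  exact MeasurableSet.iInter fun k => MeasurableSet.iInter fun n0 =>
    MeasurableSet.iUnion fun n => MeasurableSet.iUnion fun _ =>
      measurableSet_lt (measurable_avg hT hg n) measurable_const

lemma measurableSet_FA (hT : Measurable T) {g : X → ℝ} (hg : Measurable g) (q : ℝ) :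
    MeasurableSet {x | FA (fun n => avg T g n x) q} := by
  have heq : {x | FA (fun n => avg T g n x) q}
      = ⋂ (k : ℕ), ⋂ (n0 : ℕ), ⋃ (n : ℕ), ⋃ (_ : n0 ≤ n), {x | q - 1/((k:ℝ)+1) < avg T g n x} := by
    ext x
    simp only [Set.mem_iInter, Set.mem_iUnion, Set.mem_setOf_eq]
    constructor
    · intro h k n0
      obtain ⟨n, hn1, hn2⟩ := h (1/((k:ℝ)+1)) (by positivity) n0
      exact ⟨n, hn1, hn2⟩
    · intro h ε hε n0
      obtain ⟨k, hk⟩ := exists_nat_one_div_lt hε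
      obtain ⟨n, hn1, hn2⟩ := h k n0
      exact ⟨n, hn1, by push_cast at hk ⊢; linarith⟩
  rw [heq]
  exact MeasurableSet.iInter fun k => MeasurableSet.iInter fun n0 =>
    MeasurableSet.iUnion fun n => MeasurableSet.iUnion fun _ =>
      measurableSet_lt measurable_const (measurable_avg hT hg n)

lemma E_null (hT : MeasurePreserving T μ μ) {g : X → ℝ} (hg : Measurable g)
    {C : ℝ} (hC : ∀ x, |g x| ≤ C) (hC0 : 0 ≤ C) {p q : ℝ} (hpq : p < q) :
    μ {x | FB (fun n => avg T g n x) p ∧ FA (fun n => avg T g n x) q} = 0 := by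
  set E := {x | FB (fun n => avg T g n x) p ∧ FA (fun n => avg T g n x) q} with hEdef
  have hEmeas : MeasurableSet E :=
    (measurableSet_FB hT.measurable hg p).inter (measurableSet_FA hT.measurable hg q)
  have hinv : ∀ x, x ∈ E ↔ T x ∈ E := by
    intro x
    have hd : Tendsto (fun n => avg T g n (T x) - avg T g (n+1) x) atTop (nhds 0) :=
      tendsto_avg_comp_sub hC hC0 x
    have hd' : Tendsto (fun n => avg T g (n+1) x - avg T g n (T x)) atTop (nhds 0) := by
      have := hd.neg
      simpa using this
    constructor
    · rintro ⟨h1, h2⟩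
      constructor
      · exact FB_of_tendsto_sub hd' (FB_shift.mpr h1)
      · exact FA_of_tendsto_sub hd' (FA_shift.mpr h2)
    · rintro ⟨h1, h2⟩
      constructor
      · exact FB_shift.mp (FB_of_tendsto_sub hd h1)
      · exact FA_shift.mp (FA_of_tendsto_sub hd h2)
  set p' := p + (q-p)/3 with hp'def
  set q' := q - (q-p)/3 with hq'def
  have hp' : p < p' := by rw [hp'def]; linarith
  have hq' : q' < q := by rw [hq'def]; linarith
  have hpq' : p' < q' := by rw [hp'def, hq'def]; linarith
  have h1 : q' * (μ E).toReal ≤ ∫ x in E, g x ∂μ := by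
    apply maximal_ergodic_invariant hT hg hC hEmeas hinv
    intro x hx
    obtain ⟨n, hn1, hn2⟩ := hx.2 (q - q') (by linarith) 1
    have hn0 : (0:ℝ) < n := by exact_mod_cast hn1
    refine ⟨n, hn1, ?_⟩
    have hS : birkhoffSum T g n x = n * avg T g n x := by
      rw [avg]; field_simp
    rw [hS]
    have : q' < avg T g n x := by linarith
    nlinarith
  have h2 : ∫ x in E, g x ∂μ ≤ p' * (μ E).toReal := by
    have hneg : (-p') * (μ E).toReal ≤ ∫ x in E, (fun y => -g y) x ∂μ := by
      apply maximal_ergodic_invariant hT hg.neg (C := C) (fun x => by simpa using hC x) hEmeas hinv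
      intro x hx
      obtain ⟨n, hn1, hn2⟩ := hx.1 (p' - p) (by linarith) 1
      have hn0 : (0:ℝ) < n := by exact_mod_cast hn1
      refine ⟨n, hn1, ?_⟩
      have hSneg : birkhoffSum T (-g) n x = -birkhoffSum T g n x := by
        unfold birkhoffSum
        simp [Finset.sum_neg_distrib]
      have hS : birkhoffSum T g n x = n * avg T g n x := by
        rw [avg]; field_simp
      rw [hSneg, hS]
      have : avg T g n x < p' := by linarith
      nlinarith
    have hint : IntegrableOn g E μ := (integrable_of_bounded hg hC).integrableOn
    rw [MeasureTheory.integral_neg] at hneg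
    linarith
  have ht0 : (μ E).toReal = 0 := by
    have h3 := ENNReal.toReal_nonneg (a := μ E)
    nlinarith
  rcases (ENNReal.toReal_eq_zero_iff _).mp ht0 with h | h
  · exact h
  · exact absurd h (measure_ne_top μ E)

theorem birkhoff_ae (hT : MeasurePreserving T μ μ) {g : X → ℝ} (hg : Measurable g)
    {C : ℝ} (hC : ∀ x, |g x| ≤ C) (hC0 : 0 ≤ C) :
    ∀ᵐ x ∂μ, ∃ L : ℝ, Tendsto (fun n => avg T g n x) atTop (nhds L) := by
  have key : ∀ pq : ℚ × ℚ,
      μ {x | ((pq.1:ℝ) < (pq.2:ℝ)) ∧ FB (fun n => avg T g n x) pq.1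
          ∧ FA (fun n => avg T g n x) pq.2} = 0 := by
    rintro ⟨p, q⟩
    by_cases hpq : (p:ℝ) < (q:ℝ)
    · exact measure_mono_null (fun x hx => hx.2) (E_null hT hg hC hC0 hpq)
    · have : {x : X | ((p:ℝ) < (q:ℝ)) ∧ FB (fun n => avg T g n x) p
          ∧ FA (fun n => avg T g n x) q} = ∅ := by
        ext x; simp only [Set.mem_setOf_eq, Set.mem_empty_iff_false, iff_false]
        rintro ⟨h, _⟩; exact hpq h
      rw [this, measure_empty]
  have h0 : μ (⋃ pq : ℚ × ℚ, {x | ((pq.1:ℝ) < (pq.2:ℝ)) ∧ FB (fun n => avg T g n x) pq.1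
      ∧ FA (fun n => avg T g n x) pq.2}) = 0 := measure_iUnion_null key
  rw [ae_iff]
  apply measure_mono_null _ h0
  intro x hx
  simp only [Set.mem_setOf_eq, not_exists] at hx
  set u : ℕ → ℝ := fun n => avg T g n x with hu
  have hb : ∀ n, |u n| ≤ C := fun n => abs_avg_le hC hC0 n x
  have hbdd : IsBoundedUnder (· ≤ ·) atTop u := isBoundedUnder_of ⟨C, fun n => (abs_le.mp (hb n)).2⟩
  have hbdd' : IsBoundedUnder (· ≥ ·) atTop u :=
    isBoundedUnder_of ⟨-C, fun n => (abs_le.mp (hb n)).1⟩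
  have hcob : IsCoboundedUnder (· ≤ ·) atTop u := hbdd'.isCoboundedUnder_le
  have hcob' : IsCoboundedUnder (· ≥ ·) atTop u := hbdd.isCoboundedUnder_ge
  have hne : liminf u atTop ≠ limsup u atTop := by
    intro heq
    exact hx (limsup u atTop) (tendsto_of_liminf_eq_limsup heq rfl hbdd hbdd')
  have hlt : liminf u atTop < limsup u atTop :=
    lt_of_le_of_ne (liminf_le_limsup hbdd hbdd') hne
  obtain ⟨p, hp1, hp2⟩ := exists_rat_btwn hlt
  obtain ⟨q, hq1, hq2⟩ := exists_rat_btwn hp2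
  refine Set.mem_iUnion.2 ⟨(p, q), ?_⟩
  refine ⟨by exact_mod_cast hq1, ?_, ?_⟩
  · intro ε hε n0
    have hfreq := frequently_lt_of_liminf_lt hcob' hp1
    obtain ⟨n, hn1, hn2⟩ := (frequently_atTop.mp hfreq) n0
    exact ⟨n, hn1, by linarith⟩
  · intro ε hε n0
    have hfreq := frequently_lt_of_lt_limsup hcob hq2
    obtain ⟨n, hn1, hn2⟩ := (frequently_atTop.mp hfreq) n0
    exact ⟨n, hn1, by linarith⟩

end Birkhoff

section Topology

variable {M : Type*} [MetricSpace M] [CompactSpace M] [MeasurableSpace M] [BorelSpace M]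

lemma continuous_iterApply (j : ℕ) : Continuous fun p : C(M,M) × M => (p.1)^[j] p.2 := by
  induction j with
  | zero => simpa using continuous_snd
  | succ j ih =>
      simp only [Function.iterate_succ_apply']
      exact ContinuousEval.continuous_eval.comp (continuous_fst.prodMk ih)

lemma continuous_An (ψ : C(M, ℝ)) (n : ℕ) :
    Continuous fun p : C(M,M) × M => avg (⇑p.1) (⇑ψ) n p.2 := by
  apply Continuous.mul continuous_const
  unfold birkhoffSum
  exact continuous_finset_sum _ fun j _ => ψ.continuous.comp (continuous_iterApply j)

lemma isOpen_U (m : Measure M) [IsProbabilityMeasure m] {O : Set (C(M,M) × M)}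
    (hO : IsOpen O) (c : ℝ≥0∞) :
    IsOpen {f : {g : C(M,M) // MeasurePreserving g m m} | c < m {x | ((f : C(M,M)), x) ∈ O}} := by
  rw [isOpen_iff_mem_nhds]
  intro f hf
  have hslice : IsOpen {x | ((f : C(M,M)), x) ∈ O} :=
    hO.preimage (continuous_const.prodMk continuous_id)
  obtain ⟨K, hKV, hKc, hK⟩ := hslice.measurableSet.exists_lt_isCompact hf
  obtain ⟨u, v, hu, _, hfu, hKv, huv⟩ :=
    generalized_tube_lemma ((isCompact_singleton : IsCompact {(f : C(M,M))})) hKc hO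
      (by rintro ⟨y1, y2⟩ ⟨h1, h2⟩
          have h1' : y1 = (f : C(M,M)) := h1
          subst h1'
          exact hKV h2)
  refine mem_nhds_iff.mpr ⟨Subtype.val ⁻¹' u, ?_, hu.preimage continuous_subtype_val,
    hfu rfl⟩
  intro g hg
  refine lt_of_lt_of_le hK (measure_mono ?_)
  intro x hx
  exact huv ⟨hg, hKv hx⟩

lemma measure_birkhoffGe_eq (m : Measure M) [IsProbabilityMeasure m] (ψ : C(M, ℝ)) (a : ℝ)
    {C : ℝ} (hC : ∀ x, |ψ x| ≤ C) (hC0 : 0 ≤ C)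
    (f : C(M,M)) (hf : MeasurePreserving f m m) :
    m (birkhoffGe (⇑f) (⇑ψ) a)
      = m (⋂ (b : {b : ℚ // (b:ℝ) < a}) (n0 : ℕ),
          {x | ∃ n, max n0 1 ≤ n ∧ ((b:ℚ):ℝ) < avg (⇑f) (⇑ψ) n x}) := by
  have hψm : Measurable (⇑ψ) := ψ.continuous.measurable
  set A := birkhoffGe (⇑f) (⇑ψ) a with hA
  set B := ⋂ (b : {b : ℚ // (b:ℝ) < a}) (n0 : ℕ),
      {x | ∃ n, max n0 1 ≤ n ∧ ((b:ℚ):ℝ) < avg (⇑f) (⇑ψ) n x} with hB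
  have hTendEq : ∀ x L, Tendsto (fun n : ℕ => (1 / (n : ℝ)) * ∑ j ∈ Finset.range n, ψ (f^[j] x))
      atTop (nhds L) ↔ Tendsto (fun n => avg (⇑f) (⇑ψ) n x) atTop (nhds L) := by
    intro x L; rfl
  have hAB : A ⊆ B := by
    rintro x ⟨L, hL, hTend⟩
    rw [hTendEq] at hTend
    refine Set.mem_iInter.2 fun b => Set.mem_iInter.2 fun n0 => ?_
    have hb : ((b:ℚ):ℝ) < L := lt_of_lt_of_le b.2 hL
    have hev : ∀ᶠ n in atTop, ((b:ℚ):ℝ) < avg (⇑f) (⇑ψ) n x :=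
      hTend.eventually (eventually_gt_nhds hb)
    obtain ⟨N, hN⟩ := eventually_atTop.mp hev
    exact ⟨max N (max n0 1), le_max_right _ _, hN _ (le_max_left _ _)⟩
  have hsub : B \ A ⊆ {x | ¬ ∃ L, Tendsto (fun n => avg (⇑f) (⇑ψ) n x) atTop (nhds L)} := by
    rintro x ⟨hxB, hxA⟩
    rintro ⟨L, hTend⟩
    apply hxA
    refine ⟨L, ?_, (hTendEq x L).mpr hTend⟩
    by_contra hLa
    push_neg at hLa
    obtain ⟨b, hb1, hb2⟩ := exists_rat_btwn hLa
    have hev : ∀ᶠ n in atTop, avg (⇑f) (⇑ψ) n x < ((b:ℚ):ℝ) :=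
      hTend.eventually (eventually_lt_nhds hb1)
    obtain ⟨N, hN⟩ := eventually_atTop.mp hev
    obtain ⟨n, hn1, hn2⟩ := Set.mem_iInter.1 (Set.mem_iInter.1 hxB ⟨b, hb2⟩) N
    exact lt_asymm hn2 (hN n (le_trans (le_max_left _ _) hn1))
  have hnull : m {x | ¬ ∃ L, Tendsto (fun n => avg (⇑f) (⇑ψ) n x) atTop (nhds L)} = 0 := by
    have := birkhoff_ae hf hψm hC hC0
    rwa [ae_iff] at this
  apply le_antisymm
  · exact measure_mono hAB
  · have s1 : m B ≤ m (A ∪ {x | ¬ ∃ L, Tendsto (fun n => avg (⇑f) (⇑ψ) n x) atTop (nhds L)}) := by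
      apply measure_mono
      intro x hx
      by_cases hxA : x ∈ A
      · exact Or.inl hxA
      · exact Or.inr (hsub ⟨hx, hxA⟩)
    have s2 : m (A ∪ {x | ¬ ∃ L, Tendsto (fun n => avg (⇑f) (⇑ψ) n x) atTop (nhds L)})
        ≤ m A + m {x | ¬ ∃ L, Tendsto (fun n => avg (⇑f) (⇑ψ) n x) atTop (nhds L)} :=
      measure_union_le _ _
    rw [hnull, add_zero] at s2
    exact le_trans s1 s2

lemma ennreal_le_iff_forall_rat {α y : ℝ≥0∞} :
    α ≤ y ↔ ∀ q : ℚ, ((Real.toNNReal q : ℝ≥0∞) < α) → (Real.toNNReal q : ℝ≥0∞) < y := by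
  constructor
  · exact fun h q hq => lt_of_lt_of_le hq h
  · intro h
    by_contra hc
    push_neg at hc
    obtain ⟨q, _, h1, h2⟩ := ENNReal.lt_iff_exists_rat_btwn.mp hc
    exact lt_asymm h1 (h q h2)


variable (ψ : C(M, ℝ))

/-- The open set of pairs `(f,x)` with some Birkhoff average in the window above `b`. -/
def VV (b : ℚ) (n0 n1 : ℕ) : Set (C(M,M) × M) :=
  ⋃ n ∈ Finset.Icc (max n0 1) n1, {p : C(M,M) × M | ((b:ℚ):ℝ) < avg (⇑p.1) (⇑ψ) n p.2}

lemma isOpen_VV (b : ℚ) (n0 n1 : ℕ) : IsOpen (VV ψ b n0 n1) :=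
  isOpen_biUnion fun n _ => isOpen_lt continuous_const (continuous_An ψ n)

/-- Slice of `VV` at `f`. -/
def VVf (f : C(M,M)) (b : ℚ) (n0 n1 : ℕ) : Set M := {x | (f, x) ∈ VV ψ b n0 n1}

lemma isOpen_VVf (f : C(M,M)) (b : ℚ) (n0 n1 : ℕ) : IsOpen (VVf ψ f b n0 n1) :=
  (isOpen_VV ψ b n0 n1).preimage (continuous_const.prodMk continuous_id)

lemma mem_VVf_iff (f : C(M,M)) (b : ℚ) (n0 n1 : ℕ) (x : M) :
    x ∈ VVf ψ f b n0 n1 ↔ ∃ n, max n0 1 ≤ n ∧ n ≤ n1 ∧ ((b:ℚ):ℝ) < avg (⇑f) (⇑ψ) n x := by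
  simp only [VVf, VV, Set.mem_setOf_eq, Set.mem_iUnion, Finset.mem_Icc]
  constructor
  · rintro ⟨n, ⟨h1, h2⟩, h3⟩; exact ⟨n, h1, h2, h3⟩
  · rintro ⟨n, h1, h2, h3⟩; exact ⟨n, ⟨h1, h2⟩, h3⟩

lemma mono_VVf (f : C(M,M)) (b : ℚ) (n0 : ℕ) : Monotone (VVf ψ f b n0) := by
  intro n1 n1' h x hx
  rw [mem_VVf_iff] at hx ⊢
  obtain ⟨n, h1, h2, h3⟩ := hx
  exact ⟨n, h1, le_trans h2 h, h3⟩

/-- Union over the window end. -/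
def WW (f : C(M,M)) (b : ℚ) (n0 : ℕ) : Set M := ⋃ n1, VVf ψ f b n0 n1

lemma mem_WW_iff (f : C(M,M)) (b : ℚ) (n0 : ℕ) (x : M) :
    x ∈ WW ψ f b n0 ↔ ∃ n, max n0 1 ≤ n ∧ ((b:ℚ):ℝ) < avg (⇑f) (⇑ψ) n x := by
  simp only [WW, Set.mem_iUnion, mem_VVf_iff]
  constructor
  · rintro ⟨n1, n, h1, _, h3⟩; exact ⟨n, h1, h3⟩
  · rintro ⟨n, h1, h3⟩; exact ⟨n, n, h1, le_refl n, h3⟩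

lemma anti_WW (f : C(M,M)) {b b' : ℚ} {n0 n0' : ℕ} (hb : b ≤ b') (hn : n0 ≤ n0') :
    WW ψ f b' n0' ⊆ WW ψ f b n0 := by
  intro x hx
  rw [mem_WW_iff] at hx ⊢
  obtain ⟨n, h1, h2⟩ := hx
  refine ⟨n, le_trans (max_le_max hn (le_refl 1)) h1, lt_of_le_of_lt ?_ h2⟩
  exact_mod_cast hb

lemma measurableSet_WW (f : C(M,M)) (b : ℚ) (n0 : ℕ) : MeasurableSet (WW ψ f b n0) :=
  MeasurableSet.iUnion fun n1 => (isOpen_VVf ψ f b n0 n1).measurableSet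

lemma measure_WW (m : Measure M) (f : C(M,M)) (b : ℚ) (n0 : ℕ) :
    m (WW ψ f b n0) = ⨆ n1, m (VVf ψ f b n0 n1) :=
  Directed.measure_iUnion (mono_VVf ψ f b n0).directed_le

lemma measure_iInter_WW (m : Measure M) [IsProbabilityMeasure m] (a : ℝ) (f : C(M,M)) :
    m (⋂ i : {b : ℚ // (b:ℝ) < a} × ℕ, WW ψ f i.1.1 i.2)
      = ⨅ i : {b : ℚ // (b:ℝ) < a} × ℕ, m (WW ψ f i.1.1 i.2) := by
  obtain ⟨b₀, hb₀⟩ := exists_rat_lt a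
  haveI : Nonempty ({b : ℚ // (b:ℝ) < a} × ℕ) := ⟨⟨⟨b₀, hb₀⟩, 0⟩⟩
  have hdir : Directed (fun (x1 x2 : Set M) => x1 ⊇ x2)
      (fun i : {b : ℚ // (b:ℝ) < a} × ℕ => WW ψ f i.1.1 i.2) := by
    intro i j
    have hbmax : ((max i.1.1 j.1.1 : ℚ):ℝ) < a := by
      rcases max_cases (i.1.1 : ℚ) (j.1.1 : ℚ) with ⟨h1, _⟩ | ⟨h1, _⟩ <;> rw [h1]
      · exact i.1.2
      · exact j.1.2
    refine ⟨(⟨⟨max i.1.1 j.1.1, hbmax⟩, max i.2 j.2⟩), ?_, ?_⟩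
    · exact anti_WW ψ f (le_max_left _ _) (le_max_left _ _)
    · exact anti_WW ψ f (le_max_right _ _) (le_max_right _ _)
  exact Directed.measure_iInter
    (fun i => (measurableSet_WW ψ f i.1.1 i.2).nullMeasurableSet) hdir
    ⟨Classical.arbitrary _, measure_ne_top m _⟩

lemma main_iff (m : Measure M) [IsProbabilityMeasure m] (a : ℝ) (α : ℝ≥0∞)
    {C : ℝ} (hC : ∀ x, |ψ x| ≤ C) (hC0 : 0 ≤ C)
    (f : C(M,M)) (hf : MeasurePreserving f m m) :
    α ≤ m (birkhoffGe (⇑f) (⇑ψ) a) ↔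
      ∀ (b : ℚ) (n0 : ℕ) (q : ℚ), (b:ℝ) < a → ((Real.toNNReal q : ℝ≥0∞) < α) →
        ∃ n1, (Real.toNNReal q : ℝ≥0∞) < m (VVf ψ f b n0 n1) := by
  have h1 : m (birkhoffGe (⇑f) (⇑ψ) a)
      = m (⋂ i : {b : ℚ // (b:ℝ) < a} × ℕ, WW ψ f i.1.1 i.2) := by
    rw [measure_birkhoffGe_eq m ψ a hC hC0 f hf]
    congr 1
    ext x
    simp only [Set.mem_iInter, Set.mem_setOf_eq]
    constructor
    · intro h i
      rw [mem_WW_iff]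
      exact h i.1 i.2
    · intro h b n0
      have h2 := h (b, n0)
      rw [mem_WW_iff] at h2
      exact h2
  rw [h1, measure_iInter_WW ψ m a f, le_iInf_iff]
  constructor
  · intro h b n0 q hb hq
    have h2 := ennreal_le_iff_forall_rat.mp (h (⟨b, hb⟩, n0)) q hq
    rw [measure_WW, lt_iSup_iff] at h2
    exact h2
  · intro h i
    rw [ennreal_le_iff_forall_rat]
    intro q hq
    rw [measure_WW, lt_iSup_iff]
    exact h i.1.1 i.2 q i.1.2 hq

theorem isGδ_F (m : Measure M) [IsProbabilityMeasure m] (a : ℝ) (α : ℝ≥0∞) :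
    IsGδ {f : {g : C(M,M) // MeasurePreserving g m m} | α ≤ m (birkhoffGe (⇑f.1) (⇑ψ) a)} := by
  classical
  have hne : Nonempty M := by
    by_contra h
    have h1 : m Set.univ = 1 := measure_univ
    rw [Set.univ_eq_empty_iff.mpr (not_nonempty_iff.mp h)] at h1
    simp at h1
  obtain ⟨x0, -, hx0⟩ := isCompact_univ.exists_isMaxOn (Set.univ_nonempty)
    ((continuous_abs.comp ψ.continuous).continuousOn)
  have hC : ∀ x, |ψ x| ≤ |ψ x0| := fun x => hx0 (Set.mem_univ x)
  have hC0 : 0 ≤ |ψ x0| := abs_nonneg _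
  have hseteq : {f : {g : C(M,M) // MeasurePreserving g m m} | α ≤ m (birkhoffGe (⇑f.1) (⇑ψ) a)}
      = ⋂ (b : ℚ) (n0 : ℕ) (q : ℚ),
        {f : {g : C(M,M) // MeasurePreserving g m m} |
          (b:ℝ) < a → ((Real.toNNReal q : ℝ≥0∞) < α) →
            ∃ n1, (Real.toNNReal q : ℝ≥0∞) < m (VVf ψ f.1 b n0 n1)} := by
    ext f
    simp only [Set.mem_iInter, Set.mem_setOf_eq]
    exact main_iff ψ m a α hC hC0 f.1 f.2
  rw [hseteq]
  refine IsGδ.iInter fun b => IsGδ.iInter fun n0 => IsGδ.iInter fun q => IsOpen.isGδ ?_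
  by_cases hb : (b:ℝ) < a
  · by_cases hq : (Real.toNNReal q : ℝ≥0∞) < α
    · have heq : {f : {g : C(M,M) // MeasurePreserving g m m} |
          (b:ℝ) < a → ((Real.toNNReal q : ℝ≥0∞) < α) →
            ∃ n1, (Real.toNNReal q : ℝ≥0∞) < m (VVf ψ f.1 b n0 n1)}
          = ⋃ n1, {f : {g : C(M,M) // MeasurePreserving g m m} |
              (Real.toNNReal q : ℝ≥0∞) < m {x | ((f : C(M,M)), x) ∈ VV ψ b n0 n1}} := by
        ext f
        simp only [Set.mem_setOf_eq, Set.mem_iUnion, hb, hq, forall_true_left]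
        rfl
      rw [heq]
      exact isOpen_iUnion fun n1 => isOpen_U m (isOpen_VV ψ b n0 n1) _
    · have heq : {f : {g : C(M,M) // MeasurePreserving g m m} |
          (b:ℝ) < a → ((Real.toNNReal q : ℝ≥0∞) < α) →
            ∃ n1, (Real.toNNReal q : ℝ≥0∞) < m (VVf ψ f.1 b n0 n1)} = Set.univ := by
        ext f
        simp only [Set.mem_setOf_eq, Set.mem_univ, iff_true]
        intro _ hq'
        exact absurd hq' hq
      rw [heq]
      exact isOpen_univ
  · have heq : {f : {g : C(M,M) // MeasurePreserving g m m} |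
        (b:ℝ) < a → ((Real.toNNReal q : ℝ≥0∞) < α) →
          ∃ n1, (Real.toNNReal q : ℝ≥0∞) < m (VVf ψ f.1 b n0 n1)} = Set.univ := by
      ext f
      simp only [Set.mem_setOf_eq, Set.mem_univ, iff_true]
      intro hb'
      exact absurd hb' hb
    rw [heq]
    exact isOpen_univ

end Topology

/-- The set `F(φ, a, α)` of volume-preserving maps `f` for which the set of points whose
Birkhoff average exists and is `≥ a` has measure `≥ α` is a Gδ subset of the space of
volume-preserving maps; consequently `G(φ, a, ε) = F(φ, a, 1−ε) ∪ F(−φ, −a, 1−ε)` is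
also Gδ. -/
theorem birkhoff_measure_set_isGδ {M : Type*} [MetricSpace M] [CompactSpace M]
    [MeasurableSpace M] [BorelSpace M] (m : Measure M) [IsProbabilityMeasure m]
    (φ : C(M, ℝ)) (a : ℝ) (α ε : ℝ≥0∞) :
    IsGδ {f : {g : C(M, M) // MeasurePreserving g m m} |
        α ≤ m (birkhoffGe (⇑f.1) (⇑φ) a)} ∧
    IsGδ ({f : {g : C(M, M) // MeasurePreserving g m m} |
        1 - ε ≤ m (birkhoffGe (⇑f.1) (⇑φ) a)} ∪
      {f : {g : C(M, M) // MeasurePreserving g m m} |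
        1 - ε ≤ m (birkhoffGe (⇑f.1) (fun x => -φ x) (-a))}) := by
  constructor
  · exact isGδ_F φ m a α
  · have h1 := isGδ_F φ m a (1-ε)
    have h2 := isGδ_F (-φ) m (-a) (1-ε)
    exact h1.union h2
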